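/- For a μ-strongly convex differentiable function L on ℝᵈ with minimizers θ₁ of L and θ₂ of L + φ where φ is differentiable with ‖∇φ(θ)‖₂ ≤ G for all θ, the minimizers satisfy ‖θ₁ - θ₂‖₂ ≤ G/μ. -/
import Mathlib

open Filter Topology

/-- At a global minimizer of a `μ`-strongly convex function, we get a quadratic growth bound. -/
lemma strongConvexOn_min_growth {E : Type*} [NormedAddCommGroup E] [NormedSpace ℝ E]
    {μ : ℝ} {f : E → ℝ} (hf : StrongConvexOn Set.univ μ f)
    {x : E} (hx : ∀ z, f x ≤ f z) (y : E) :
    f x + μ / 2 * ‖y - x‖ ^ 2 ≤ f y := by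
  set c : ℝ := μ / 2 * ‖y - x‖ ^ 2 with hc
  have key : ∀ t ∈ Set.Ioo (0 : ℝ) 1, f x + (1 - t) * c ≤ f y := by
    intro t ht
    have h := hf.2 (Set.mem_univ y) (Set.mem_univ x) (le_of_lt ht.1)
      (by linarith [ht.2] : (0:ℝ) ≤ 1 - t) (by ring)
    have hxle : f x ≤ f (t • y + (1 - t) • x) := hx _
    have hnorm : ‖y - x‖ = ‖x - y‖ := by rw [← norm_neg]; congr 1; abel
    rw [smul_eq_mul, smul_eq_mul] at h
    have h2 : f x ≤ t * f y + (1 - t) * f x - t * (1 - t) * c := by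
      rw [hc]; simpa using hxle.trans h
    have h3 : t * (f x + (1 - t) * c) ≤ t * f y := by nlinarith
    exact le_of_mul_le_mul_left h3 ht.1
  have htend : Tendsto (fun t : ℝ => f x + (1 - t) * c) (𝓝[>] (0:ℝ)) (𝓝 (f x + c)) := by
    have : Tendsto (fun t : ℝ => f x + (1 - t) * c) (𝓝 (0:ℝ)) (𝓝 (f x + (1 - 0) * c)) :=
      Continuous.tendsto (by continuity) 0
    simpa using this.mono_left nhdsWithin_le_nhds
  have hev : ∀ᶠ t in 𝓝[>] (0:ℝ), f x + (1 - t) * c ≤ f y :=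
    eventually_of_mem (Ioo_mem_nhdsGT_of_mem (by norm_num : (0:ℝ) ∈ Set.Ico 0 1)) key
  exact le_of_tendsto htend hev

/-- Minimizer stability under strongly convex perturbation: if `L` is differentiable and
`μ`-strongly convex, `φ` is differentiable and convex with `‖∇φ‖ ≤ G` everywhere, `θ₁`
minimizes `L` and `θ₂` minimizes `L + φ`, then `‖θ₁ - θ₂‖ ≤ G/μ`. -/
theorem stmt_17 (d : ℕ) (μ G : ℝ) (hμ : 0 < μ) (hG : 0 ≤ G)
    (L φ : EuclideanSpace ℝ (Fin d) → ℝ)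
    (hLdiff : Differentiable ℝ L) (hφdiff : Differentiable ℝ φ)
    (hLsc : StrongConvexOn Set.univ μ L)
    (hφconv : ConvexOn ℝ Set.univ φ)
    (hφgrad : ∀ θ, ‖gradient φ θ‖ ≤ G)
    (θ₁ θ₂ : EuclideanSpace ℝ (Fin d))
    (hθ₁ : ∀ θ, L θ₁ ≤ L θ)
    (hθ₂ : ∀ θ, L θ₂ + φ θ₂ ≤ L θ + φ θ) :
    ‖θ₁ - θ₂‖ ≤ G / μ := by
  -- L + φ is μ-strongly convex
  have hsum : StrongConvexOn Set.univ μ (L + φ) := by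
    have := hLsc.add hφconv.uniformConvexOn_zero
    exact this.mono (by intro r; simp)
  have h1 : L θ₁ + μ / 2 * ‖θ₂ - θ₁‖ ^ 2 ≤ L θ₂ := strongConvexOn_min_growth hLsc hθ₁ θ₂
  have h2 : (L + φ) θ₂ + μ / 2 * ‖θ₁ - θ₂‖ ^ 2 ≤ (L + φ) θ₁ :=
    strongConvexOn_min_growth hsum (fun z => hθ₂ z) θ₁
  simp only [Pi.add_apply] at h2
  have hnorm : ‖θ₂ - θ₁‖ = ‖θ₁ - θ₂‖ := by rw [← norm_neg]; congr 1; abel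
  rw [hnorm] at h1
  have hkey : μ * ‖θ₁ - θ₂‖ ^ 2 ≤ φ θ₁ - φ θ₂ := by linarith
  -- Lipschitz bound from the gradient bound
  have hlip : φ θ₁ - φ θ₂ ≤ G * ‖θ₁ - θ₂‖ := by
    have hbound : ∀ z ∈ (Set.univ : Set (EuclideanSpace ℝ (Fin d))), ‖fderiv ℝ φ z‖ ≤ G := by
      intro z _
      have := hφgrad z
      rwa [gradient, LinearIsometryEquiv.norm_map] at this
    have := convex_univ.norm_image_sub_le_of_norm_fderiv_le
      (fun z _ => (hφdiff z)) hbound (Set.mem_univ θ₂) (Set.mem_univ θ₁)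
    calc φ θ₁ - φ θ₂ ≤ ‖φ θ₁ - φ θ₂‖ := le_abs_self _
      _ ≤ G * ‖θ₁ - θ₂‖ := this
  rcases eq_or_lt_of_le (norm_nonneg (θ₁ - θ₂)) with h0 | h0
  · rw [← h0]; positivity
  · rw [le_div_iff₀ hμ]
    nlinarith
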